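/- Let ε < p ≤ 1 and let μ be a feasible prior, and set β = μ((ε, p]). Then there exist points x1 ∈ [p_l, ε], x2 ∈ [ε, p] and x3 ∈ [p, 1] such that ∫_{[p_l,ε]} f dμ = θ·f(x1), ∫_{(ε,p]} f dμ = β·f(x2), and ∫_{(p,1]} f dμ = (1−θ−β)·f(x3); consequently P(μ,p) = (θ·f(x1) + β·f(x2)) / (θ·f(x1) + β·f(x2) + (1−θ−β)·f(x3)). (Every feasible prior has an equivalent three-point prior.) -/

import Mathlib

open MeasureTheory Set

/-- The Bernoulli likelihood of observing `k` failures in `n` trials. -/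
noncomputable def likelihood (k n : ℕ) (x : ℝ) : ℝ := x ^ k * (1 - x) ^ (n - k)

/-- A prior (probability measure on `[0,1]`) is feasible if it assigns mass `θ`
to `[0, ε]` and full mass to `[p_l, 1]`. -/
def Feasible (pl ε θ : ℝ) (μ : Measure ℝ) : Prop :=
  IsProbabilityMeasure μ ∧ μ (Icc 0 ε) = ENNReal.ofReal θ ∧ μ (Icc pl 1) = 1

/-- The posterior confidence `P(μ, p)` in the bound `p` after observing
`k` failures in `n` miles, with prior `μ`. -/
noncomputable def posterior (k n : ℕ) (μ : Measure ℝ) (p : ℝ) : ℝ :=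
  (∫ x in Icc (0 : ℝ) p, likelihood k n x ∂μ) /
    (∫ x in Icc (0 : ℝ) 1, likelihood k n x ∂μ)

lemma like_cont (k n : ℕ) : Continuous (likelihood k n) := by
  unfold likelihood; fun_prop

lemma mvt_int (k n : ℕ) (μ : Measure ℝ) [IsFiniteMeasure μ] {a b : ℝ} (hab : a ≤ b)
    {S : Set ℝ} (hS : MeasurableSet S) (hSsub : S ⊆ Icc a b) :
    ∃ x ∈ Icc a b, ∫ y in S, likelihood k n y ∂μ = (μ S).toReal * likelihood k n x := by
  have hf := like_cont k n
  have hInt : IntegrableOn (likelihood k n) S μ :=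
    (hf.continuousOn.integrableOn_compact isCompact_Icc).mono_set hSsub
  by_cases h0 : μ S = 0
  · refine ⟨a, ⟨le_refl a, hab⟩, ?_⟩
    rw [Measure.restrict_eq_zero.mpr h0, h0]; simp
  · set m := (μ S).toReal with hm
    have hmpos : 0 < m := ENNReal.toReal_pos h0 (measure_ne_top μ S)
    obtain ⟨xm, hxm, hmin⟩ := isCompact_Icc.exists_isMinOn (nonempty_Icc.mpr hab)
      hf.continuousOn (f := likelihood k n)
    obtain ⟨xM, hxM, hmax⟩ := isCompact_Icc.exists_isMaxOn (nonempty_Icc.mpr hab)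
      hf.continuousOn (f := likelihood k n)
    have hlo : m * likelihood k n xm ≤ ∫ y in S, likelihood k n y ∂μ := by
      have := setIntegral_mono_on ((integrableOn_const_iff).mpr (Or.inr (measure_lt_top μ S)))
        hInt hS (fun y hy => hmin (hSsub hy))
      simpa [setIntegral_const, mul_comm, hm, measureReal_def] using this
    have hhi : (∫ y in S, likelihood k n y ∂μ) ≤ m * likelihood k n xM := by
      have := setIntegral_mono_on hInt ((integrableOn_const_iff).mpr (Or.inr (measure_lt_top μ S)))
        hS (fun y hy => hmax (hSsub hy))
      simpa [setIntegral_const, mul_comm, hm, measureReal_def] using this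
    set c := (∫ y in S, likelihood k n y ∂μ) / m with hc
    have hc1 : likelihood k n xm ≤ c := (le_div_iff₀ hmpos).mpr (by linarith)
    have hc2 : c ≤ likelihood k n xM := (div_le_iff₀ hmpos).mpr (by linarith)
    have := intermediate_value_uIcc (a := xm) (b := xM) (f := likelihood k n)
      (hf.continuousOn)
    obtain ⟨x, hx, hfx⟩ := this (by rw [Set.mem_uIcc]; left; exact ⟨hc1, hc2⟩)
    refine ⟨x, (uIcc_subset_Icc hxm hxM) hx, ?_⟩
    rw [hfx, hc, mul_div_cancel₀ _ (ne_of_gt hmpos)]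

lemma disjIccIoc (a b c : ℝ) : Disjoint (Icc a b) (Ioc b c) := by
  rw [Set.disjoint_left]
  rintro x ⟨_, h1⟩ ⟨h2, _⟩
  exact absurd h1 (not_le.mpr h2)

theorem stmt_8 (k n : ℕ) (hkn : k ≤ n) (pl ε θ p : ℝ)
    (hpl : 0 < pl) (hple : pl < ε) (hε1 : ε < 1)
    (hθ0 : 0 < θ) (hθ1 : θ ≤ 1) (hεp : ε < p) (hp1 : p ≤ 1)
    (μ : Measure ℝ) (hμ : Feasible pl ε θ μ)
    (β : ℝ) (hβ : β = (μ (Ioc ε p)).toReal) :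
    ∃ x1 ∈ Icc pl ε, ∃ x2 ∈ Icc ε p, ∃ x3 ∈ Icc p 1,
      (∫ x in Icc pl ε, likelihood k n x ∂μ) = θ * likelihood k n x1 ∧
      (∫ x in Ioc ε p, likelihood k n x ∂μ) = β * likelihood k n x2 ∧
      (∫ x in Ioc p 1, likelihood k n x ∂μ) = (1 - θ - β) * likelihood k n x3 ∧
      posterior k n μ p =
        (θ * likelihood k n x1 + β * likelihood k n x2) /
          (θ * likelihood k n x1 + β * likelihood k n x2 +
            (1 - θ - β) * likelihood k n x3) := by
  obtain ⟨hprob, hθμ, hplμ⟩ := hμ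
  haveI := hprob
  -- complement of [pl,1] is null
  have hnull : μ (Icc pl 1)ᶜ = 0 := by
    rw [measure_compl measurableSet_Icc (measure_ne_top μ _), hplμ, measure_univ, tsub_self]
  -- mass of [pl, ε]
  have hset1 : Icc (0:ℝ) ε \ (Icc pl 1)ᶜ = Icc pl ε := by
    ext x
    simp only [mem_diff, mem_compl_iff, not_not, mem_Icc]
    constructor
    · rintro ⟨⟨h0, hε⟩, h1, h2⟩; exact ⟨h1, hε⟩
    · rintro ⟨h1, h2⟩; exact ⟨⟨by linarith, h2⟩, by linarith, by linarith⟩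
  have hmass1 : μ (Icc pl ε) = ENNReal.ofReal θ := by
    rw [← hset1, measure_diff_null hnull, hθμ]
  have hmass1R : (μ (Icc pl ε)).toReal = θ := by
    rw [hmass1, ENNReal.toReal_ofReal hθ0.le]
  -- measure of [0,1] is 1
  have h01 : μ (Icc (0:ℝ) 1) = 1 := le_antisymm prob_le_one
    (hplμ ▸ measure_mono (Icc_subset_Icc hpl.le le_rfl))
  -- partition
  have hsum : μ (Icc (0:ℝ) ε) + μ (Ioc ε p) + μ (Ioc p 1) = 1 := by
    rw [← measure_union (disjIccIoc _ _ _) measurableSet_Ioc,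
      Icc_union_Ioc_eq_Icc (by linarith) (by linarith),
      ← measure_union (disjIccIoc _ _ _) measurableSet_Ioc,
      Icc_union_Ioc_eq_Icc (by linarith) hp1, h01]
  have hmass3R : (μ (Ioc p 1)).toReal = 1 - θ - β := by
    have h := congrArg ENNReal.toReal hsum
    rw [ENNReal.toReal_add (by finiteness) (by finiteness),
      ENNReal.toReal_add (by finiteness) (by finiteness), hθμ,
      ENNReal.toReal_ofReal hθ0.le, ENNReal.toReal_one] at h
    rw [hβ]; linarith
  -- apply MVT on each piece
  obtain ⟨x1, hx1, he1⟩ := mvt_int k n μ (le_of_lt hple) measurableSet_Icc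
    (subset_refl (Icc pl ε))
  obtain ⟨x2, hx2, he2⟩ := mvt_int k n μ (le_of_lt hεp) measurableSet_Ioc
    (Ioc_subset_Icc_self (a := ε) (b := p))
  obtain ⟨x3, hx3, he3⟩ := mvt_int k n μ hp1 measurableSet_Ioc
    (Ioc_subset_Icc_self (a := p) (b := 1))
  rw [hmass1R] at he1
  rw [← hβ] at he2
  rw [hmass3R] at he3
  refine ⟨x1, hx1, x2, hx2, x3, hx3, he1, he2, he3, ?_⟩
  -- posterior formula
  have hf := like_cont k n
  have hInt : ∀ S : Set ℝ, S ⊆ Icc (0:ℝ) 1 → IntegrableOn (likelihood k n) S μ :=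
    fun S hS => (hf.continuousOn.integrableOn_compact isCompact_Icc).mono_set hS
  have hae : Icc (0:ℝ) ε =ᵐ[μ] Icc pl ε := by
    refine MeasureTheory.ae_eq_set.mpr ⟨measure_mono_null ?_ hnull, ?_⟩
    · intro x hx
      simp only [mem_diff, mem_Icc, not_and, not_le] at hx
      rcases hx with ⟨⟨h0, hε⟩, h2⟩
      simp only [mem_compl_iff, mem_Icc, not_and, not_le]
      intro h1
      exact absurd (h2 h1) (not_lt.mpr hε)
    · rw [diff_eq_empty.mpr (Icc_subset_Icc hpl.le le_rfl)]
      simp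
  have hI0ε : (∫ x in Icc (0:ℝ) ε, likelihood k n x ∂μ)
      = ∫ x in Icc pl ε, likelihood k n x ∂μ := setIntegral_congr_set hae
  have hsplit1 : (∫ x in Icc (0:ℝ) p, likelihood k n x ∂μ)
      = (∫ x in Icc (0:ℝ) ε, likelihood k n x ∂μ) + ∫ x in Ioc ε p, likelihood k n x ∂μ := by
    rw [← setIntegral_union (disjIccIoc _ _ _) measurableSet_Ioc
      (hInt _ (Icc_subset_Icc le_rfl (by linarith))) (hInt _ (Ioc_subset_Icc_self.trans
        (Icc_subset_Icc (by linarith) hp1))),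
      Icc_union_Ioc_eq_Icc (by linarith) (by linarith)]
  have hsplit2 : (∫ x in Icc (0:ℝ) 1, likelihood k n x ∂μ)
      = (∫ x in Icc (0:ℝ) p, likelihood k n x ∂μ) + ∫ x in Ioc p 1, likelihood k n x ∂μ := by
    rw [← setIntegral_union (disjIccIoc _ _ _) measurableSet_Ioc
      (hInt _ (Icc_subset_Icc le_rfl hp1)) (hInt _ (Ioc_subset_Icc_self.trans
        (Icc_subset_Icc (by linarith) le_rfl))),
      Icc_union_Ioc_eq_Icc (by linarith) hp1]
  unfold posterior
  rw [hsplit2, hsplit1, hI0ε, he1, he2, he3]
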